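/- Let M be an m × n matrix over F_q such that every column of M has at least one non-zero entry, and let s ∈ {0,…,q-1}^n and w ∈ F_q^n. Then there exists v ∈ F_q^m such that the number of indices i ∈ [n] with w_i + (vM)_i ≥ s_i is at least n - ⌊(∑_{i=0}^{n-1} s_i)/q⌋. -/

import Mathlib

section aux

variable {F : Type} [Field F] [Fintype F] [DecidableEq F]

/-- vecMul after an update of one coordinate. -/
lemma vecMul_update_aux {m n : ℕ} (M : Matrix (Fin m) (Fin n) F) (i : Fin n) (k : Fin m)
    (v : Fin m → F) (a : F) :
    Matrix.vecMul (Function.update v k a) M i = Matrix.vecMul v M i + (a - v k) * M k i := by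
  simp only [Matrix.vecMul, dotProduct]
  have h : (∑ j, Function.update v k a j * M j i) - (∑ j, v j * M j i)
      = (a - v k) * M k i := by
    rw [← Finset.sum_sub_distrib, Finset.sum_eq_single k]
    · simp [sub_mul]
    · intro j _ hj
      simp [Function.update_of_ne hj]
    · simp
  linear_combination h

/-- All fibers of `v ↦ w + vecMul v M i` have the same cardinality. -/
lemma fiber_const {m n : ℕ} (M : Matrix (Fin m) (Fin n) F) (i : Fin n)
    (k : Fin m) (hk : M k i ≠ 0) (wi : F) (t t' : F) :
    (Finset.univ.filter (fun v : Fin m → F => wi + Matrix.vecMul v M i = t)).card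
      = (Finset.univ.filter (fun v : Fin m → F => wi + Matrix.vecMul v M i = t')).card := by
  set d := (t' - t) * (M k i)⁻¹ with hd
  have hdc : d * M k i = t' - t := by rw [hd]; field_simp
  apply Finset.card_bij' (fun v _ => Function.update v k (v k + d))
    (fun v _ => Function.update v k (v k - d))
  · intro v _
    funext j
    by_cases hj : j = k
    · subst hj; simp
    · simp [Function.update_of_ne hj]
  · intro v _
    funext j
    by_cases hj : j = k
    · subst hj; simp
    · simp [Function.update_of_ne hj]
  · intro v hv
    simp only [Finset.mem_filter, Finset.mem_univ, true_and] at hv ⊢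
    rw [vecMul_update_aux]
    linear_combination hv + hdc
  · intro v hv
    simp only [Finset.mem_filter, Finset.mem_univ, true_and] at hv ⊢
    rw [vecMul_update_aux]
    linear_combination hv - hdc

/-- Each fiber has cardinality `q^m / q`, stated multiplicatively. -/
lemma fiber_card_mul {m n q : ℕ} (hq : Fintype.card F = q) (M : Matrix (Fin m) (Fin n) F)
    (i : Fin n) (k : Fin m) (hk : M k i ≠ 0) (wi : F) (t : F) :
    (Finset.univ.filter (fun v : Fin m → F => wi + Matrix.vecMul v M i = t)).card * q
      = q ^ m := by
  have htot : (Finset.univ : Finset (Fin m → F)).card = q ^ m := by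
    simp [Fintype.card_fun, hq]
  have hpart : (Finset.univ : Finset (Fin m → F)).card
      = ∑ t' : F, (Finset.univ.filter
          (fun v : Fin m → F => wi + Matrix.vecMul v M i = t')).card :=
    Finset.card_eq_sum_card_fiberwise (fun v _ => Finset.mem_univ _)
  have hconst : ∀ t' : F, (Finset.univ.filter
      (fun v : Fin m → F => wi + Matrix.vecMul v M i = t')).card
      = (Finset.univ.filter (fun v : Fin m → F => wi + Matrix.vecMul v M i = t)).card :=
    fun t' => fiber_const M i k hk wi t' t
  rw [hpart, Finset.sum_congr rfl (fun t' _ => hconst t'), Finset.sum_const,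
    Finset.card_univ, hq, smul_eq_mul, mul_comm] at htot
  exact htot

end aux

/-- If every column of `M` is non-zero, then for every `w` there is a `v` such that
`w i + (v·M) i ≥ s i` (w.r.t. an identification `ι` of `F_q` with `{0,…,q-1}`) in at
least `n - ⌊(∑ s i)/q⌋` coordinates. -/
theorem exists_vecMul_masking (F : Type) [Field F] [Fintype F] [DecidableEq F]
    (q m n : ℕ) (hq : Fintype.card F = q) (ι : F ≃ Fin q)
    (M : Matrix (Fin m) (Fin n) F) (hcol : ∀ j : Fin n, ∃ i : Fin m, M i j ≠ 0)
    (s : Fin n → ℕ) (hs : ∀ i, s i ≤ q - 1) (w : Fin n → F) :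
    ∃ v : Fin m → F,
      n - (∑ i, s i) / q ≤
        (Finset.univ.filter (fun i : Fin n =>
          s i ≤ (ι (w i + Matrix.vecMul v M i)).val)).card := by
  classical
  have hq0 : 0 < q := hq ▸ Fintype.card_pos
  -- the "bad" count for a given v
  set B : (Fin m → F) → ℕ := fun v =>
    (Finset.univ.filter (fun i : Fin n =>
      (ι (w i + Matrix.vecMul v M i)).val < s i)).card with hB
  -- bad set per coordinate has cardinality s i * q^(m-1), stated multiplicatively
  have hbad : ∀ i : Fin n,
      (Finset.univ.filter (fun v : Fin m → F =>
        (ι (w i + Matrix.vecMul v M i)).val < s i)).card * q = s i * q ^ m := by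
    intro i
    obtain ⟨k, hk⟩ := hcol i
    -- the set of bad values
    set T : Finset F := Finset.univ.filter (fun x : F => (ι x).val < s i) with hT
    have hTcard : T.card = s i := by
      have hlt : s i < q := lt_of_le_of_lt (hs i) (Nat.sub_lt hq0 one_pos)
      have h1 : T.card = (Finset.univ.filter (fun y : Fin q => y.val < s i)).card := by
        apply Finset.card_nbij (fun x => ι x)
        · intro x hx
          simp only [hT, Finset.mem_coe, Finset.mem_filter, Finset.mem_univ, true_and] at hx ⊢
          exact hx
        · intro x _ y _ hxy
          exact ι.injective hxy
        · intro y hy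
          refine ⟨ι.symm y, ?_, by simp⟩
          simp only [hT, Finset.mem_coe, Finset.mem_filter, Finset.mem_univ, true_and,
            Equiv.apply_symm_apply] at hy ⊢
          exact hy
      rw [h1]
      have h2 : (Finset.univ.filter (fun y : Fin q => y.val < s i))
          = Finset.Iio (⟨s i, hlt⟩ : Fin q) := by
        ext y
        simp [Fin.lt_def]
      rw [h2, Fin.card_Iio]
    -- partition the bad v's by value
    have hpart : (Finset.univ.filter (fun v : Fin m → F =>
        (ι (w i + Matrix.vecMul v M i)).val < s i)).card
        = ∑ t ∈ T, ((Finset.univ.filter (fun v : Fin m → F =>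
            (ι (w i + Matrix.vecMul v M i)).val < s i)).filter
              (fun v => w i + Matrix.vecMul v M i = t)).card := by
      apply Finset.card_eq_sum_card_fiberwise
      intro v hv
      simp only [Finset.mem_coe, Finset.mem_filter, Finset.mem_univ, true_and] at hv
      simp only [hT, Finset.mem_coe, Finset.mem_filter, Finset.mem_univ, true_and]
      exact hv
    have hinner : ∀ t ∈ T, ((Finset.univ.filter (fun v : Fin m → F =>
        (ι (w i + Matrix.vecMul v M i)).val < s i)).filter
          (fun v => w i + Matrix.vecMul v M i = t)).card
        = (Finset.univ.filter (fun v : Fin m → F =>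
            w i + Matrix.vecMul v M i = t)).card := by
      intro t ht
      simp only [hT, Finset.mem_filter, Finset.mem_univ, true_and] at ht
      congr 1
      rw [Finset.filter_filter]
      ext v
      simp only [Finset.mem_filter, Finset.mem_univ, true_and]
      constructor
      · exact fun h => h.2
      · intro h
        refine ⟨?_, h⟩
        rw [h]
        exact ht
    rw [hpart, Finset.sum_congr rfl hinner, Finset.sum_mul,
      Finset.sum_congr rfl (fun t _ => fiber_card_mul hq M i k hk (w i) t),
      Finset.sum_const, hTcard, smul_eq_mul]
  -- total bad count over all v
  have htotal : (∑ v : Fin m → F, B v) * q = (∑ i, s i) * q ^ m := by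
    have hBv : ∀ v : Fin m → F, B v = ∑ i : Fin n,
        if (ι (w i + Matrix.vecMul v M i)).val < s i then 1 else 0 := by
      intro v
      rw [hB]
      exact Finset.card_filter _ _
    rw [Finset.sum_congr rfl (fun v _ => hBv v), Finset.sum_comm, Finset.sum_mul,
      Finset.sum_mul]
    apply Finset.sum_congr rfl
    intro i _
    rw [← hbad i]
    congr 1
    exact (Finset.card_filter _ _).symm
  -- choose v minimizing B
  obtain ⟨v₀, _, hv₀⟩ := Finset.exists_min_image Finset.univ B Finset.univ_nonempty
  have hle : B v₀ * q ≤ ∑ i, s i := by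
    have h1 : (q ^ m) * (B v₀ * q) ≤ (∑ v : Fin m → F, B v) * q := by
      rw [← mul_assoc]
      apply Nat.mul_le_mul_right
      calc q ^ m * B v₀ = ∑ _v : Fin m → F, B v₀ := by
            rw [Finset.sum_const, Finset.card_univ, Fintype.card_fun, hq, smul_eq_mul]
            simp
        _ ≤ ∑ v : Fin m → F, B v := Finset.sum_le_sum (fun v _ => hv₀ v (Finset.mem_univ v))
    rw [htotal, mul_comm (∑ i, s i) (q ^ m)] at h1
    exact Nat.le_of_mul_le_mul_left h1 (pow_pos hq0 m)
  refine ⟨v₀, ?_⟩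
  have hBle : B v₀ ≤ (∑ i, s i) / q := (Nat.le_div_iff_mul_le hq0).mpr hle
  have hsplit : (Finset.univ.filter (fun i : Fin n =>
      s i ≤ (ι (w i + Matrix.vecMul v₀ M i)).val)).card + B v₀ = n := by
    rw [hB]
    have h := Finset.card_filter_add_card_filter_not
      (s := (Finset.univ : Finset (Fin n)))
      (p := fun i : Fin n => s i ≤ (ι (w i + Matrix.vecMul v₀ M i)).val)
    simp only [not_le, Finset.card_univ, Fintype.card_fin] at h
    convert h using 3
  omega
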